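/- Let α > 0, α ≠ 1, and let R̄ be a balanced ensemble. If an ensemble R ∈ T_α(R̄) has exponent vector (n1,...,n6) and is obtained from R̄_α = (α·r̄_DE, r̄_DP, r̄_DY, r̄_EP, r̄_EY, r̄_PY) by a finite chain of arbitrage operations, then |n1 − n2 + n4| ≤ 1, |n1 − n3 + n5| ≤ 1, and |n2 − n3 + n6| ≤ 1. -/

import Mathlib

open Classical

/-- An ensemble of principal exchange rates: index `0 = r_DE`, `1 = r_DP`, `2 = r_DY`,
`3 = r_EP`, `4 = r_EY`, `5 = r_PY`. An arbitrage operation has an activation condition,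
a target rate, and a new value for the target rate. -/
structure Arb where
  cond : (Fin 6 → ℝ) → Prop
  idx : Fin 6
  val : (Fin 6 → ℝ) → ℝ

/-- Applying an arbitrage: if its activation condition holds, the target rate is replaced
by the specified product/quotient of two other rates; otherwise the ensemble is unchanged. -/
noncomputable def applyArb (A : Arb) (R : Fin 6 → ℝ) : Fin 6 → ℝ :=
  if A.cond R then Function.update R A.idx (A.val R) else R

/-- The 24 arbitrage operations from the arbitrage table. -/
noncomputable def arbs : List Arb := [
  ⟨fun R => R 3 > R 0 * R 1, 0, fun R => R 1 / R 3⟩,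
  ⟨fun R => R 2 > R 0 * R 4, 0, fun R => R 2 / R 4⟩,
  ⟨fun R => R 0 * R 3 > R 1, 1, fun R => R 0 * R 3⟩,
  ⟨fun R => R 2 > R 1 * R 5, 1, fun R => R 2 / R 5⟩,
  ⟨fun R => R 0 * R 4 > R 2, 2, fun R => R 0 * R 4⟩,
  ⟨fun R => R 1 * R 5 > R 2, 2, fun R => R 1 * R 5⟩,
  ⟨fun R => R 1 < R 0 * R 3, 0, fun R => R 1 / R 3⟩,
  ⟨fun R => R 2 < R 0 * R 4, 0, fun R => R 2 / R 4⟩,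
  ⟨fun R => R 1 > R 3 * R 0, 3, fun R => R 1 / R 0⟩,
  ⟨fun R => R 4 > R 3 * R 5, 3, fun R => R 4 / R 5⟩,
  ⟨fun R => R 2 > R 4 * R 0, 4, fun R => R 2 / R 0⟩,
  ⟨fun R => R 3 * R 5 > R 4, 4, fun R => R 3 * R 5⟩,
  ⟨fun R => R 0 * R 3 < R 1, 1, fun R => R 0 * R 3⟩,
  ⟨fun R => R 2 < R 1 * R 5, 1, fun R => R 2 / R 5⟩,
  ⟨fun R => R 1 < R 3 * R 0, 3, fun R => R 1 / R 0⟩,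
  ⟨fun R => R 4 < R 3 * R 5, 3, fun R => R 4 / R 5⟩,
  ⟨fun R => R 2 > R 5 * R 1, 5, fun R => R 2 / R 1⟩,
  ⟨fun R => R 4 > R 5 * R 3, 5, fun R => R 4 / R 3⟩,
  ⟨fun R => R 0 * R 4 < R 2, 2, fun R => R 0 * R 4⟩,
  ⟨fun R => R 1 * R 5 < R 2, 2, fun R => R 1 * R 5⟩,
  ⟨fun R => R 2 < R 4 * R 0, 4, fun R => R 2 / R 0⟩,
  ⟨fun R => R 3 * R 5 < R 4, 4, fun R => R 3 * R 5⟩,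
  ⟨fun R => R 2 < R 5 * R 1, 5, fun R => R 2 / R 1⟩,
  ⟨fun R => R 4 < R 5 * R 3, 5, fun R => R 4 / R 3⟩]

/-- Balanced ensemble: `r_EP = r_DP/r_DE`, `r_EY = r_DY/r_DE`, `r_PY = r_DY/r_DP`. -/
def IsBalanced (R : Fin 6 → ℝ) : Prop :=
  R 3 = R 1 / R 0 ∧ R 4 = R 2 / R 0 ∧ R 5 = R 2 / R 1

/-- The set `T_α(R̄)` of all ensembles `(α^{n1}·r̄_DE, …, α^{n6}·r̄_PY)` with integer
exponents. -/
def Talpha (α : ℝ) (Rbar : Fin 6 → ℝ) : Set (Fin 6 → ℝ) :=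
  {R | ∃ n : Fin 6 → ℤ, ∀ i, R i = α ^ (n i) * Rbar i}

namespace Stmt18Aux

/-- The closed set of reachable discrepancy triples. -/
def Slist : List (ℤ × ℤ × ℤ) :=
  [(-1,-1,0),(-1,0,0),(-1,0,1),(0,-1,-1),(0,-1,0),(0,0,-1),(0,0,0),(0,0,1),
   (0,1,0),(0,1,1),(1,0,-1),(1,0,0),(1,1,0)]

/-- Discrepancy triple of an exponent vector. -/
def Dv (m : Fin 6 → ℤ) : ℤ × ℤ × ℤ :=
  (m 0 - m 1 + m 3, m 0 - m 2 + m 4, m 1 - m 2 + m 5)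

/-- The invariant. -/
def Inv (α : ℝ) (Rbar : Fin 6 → ℝ) (R : Fin 6 → ℝ) : Prop :=
  ∃ m : Fin 6 → ℤ, (∀ i, R i = α ^ (m i) * Rbar i) ∧ Dv m ∈ Slist

lemma upd (α : ℝ) (Rbar R : Fin 6 → ℝ) (m : Fin 6 → ℤ)
    (hm : ∀ i, R i = α ^ (m i) * Rbar i) (i : Fin 6) (v : ℝ) (k : ℤ)
    (hv : v = α ^ k * Rbar i) :
    ∀ j, Function.update R i v j = α ^ (Function.update m i k j) * Rbar j := by
  intro j
  rcases eq_or_ne j i with rfl | h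
  · simpa using hv
  · simp [Function.update_of_ne h, hm j]

lemma k0a' : ∀ p ∈ Slist, ((0 : ℤ), p.2.1 - p.1, p.2.2) ∈ Slist := by
  intro p hp
  fin_cases hp <;> decide

lemma k0a (m : Fin 6 → ℤ) (h : Dv m ∈ Slist) :
    Dv (Function.update m 0 (m 1 - m 3)) ∈ Slist := by
  have he : Dv (Function.update m 0 (m 1 - m 3)) = (0, (Dv m).2.1 - (Dv m).1, (Dv m).2.2) := by
    refine Prod.ext ?_ (Prod.ext ?_ ?_) <;> simp [Dv, Function.update_apply] <;> ring
  rw [he]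
  exact k0a' _ h

lemma k0b' : ∀ p ∈ Slist, ((p.1 - p.2.1 : ℤ), 0, p.2.2) ∈ Slist := by
  intro p hp
  fin_cases hp <;> decide

lemma k0b (m : Fin 6 → ℤ) (h : Dv m ∈ Slist) :
    Dv (Function.update m 0 (m 2 - m 4)) ∈ Slist := by
  have he : Dv (Function.update m 0 (m 2 - m 4)) = ((Dv m).1 - (Dv m).2.1, 0, (Dv m).2.2) := by
    refine Prod.ext ?_ (Prod.ext ?_ ?_) <;> simp [Dv, Function.update_apply] <;> ring
  rw [he]
  exact k0b' _ h

lemma k1a' : ∀ p ∈ Slist, ((0 : ℤ), p.2.1, p.2.2 + p.1) ∈ Slist := by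
  intro p hp
  fin_cases hp <;> decide

lemma k1a (m : Fin 6 → ℤ) (h : Dv m ∈ Slist) :
    Dv (Function.update m 1 (m 0 + m 3)) ∈ Slist := by
  have he : Dv (Function.update m 1 (m 0 + m 3)) = (0, (Dv m).2.1, (Dv m).2.2 + (Dv m).1) := by
    refine Prod.ext ?_ (Prod.ext ?_ ?_) <;> simp [Dv, Function.update_apply] <;> ring
  rw [he]
  exact k1a' _ h

lemma k1b' : ∀ p ∈ Slist, ((p.1 + p.2.2 : ℤ), p.2.1, 0) ∈ Slist := by
  intro p hp
  fin_cases hp <;> decide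

lemma k1b (m : Fin 6 → ℤ) (h : Dv m ∈ Slist) :
    Dv (Function.update m 1 (m 2 - m 5)) ∈ Slist := by
  have he : Dv (Function.update m 1 (m 2 - m 5)) = ((Dv m).1 + (Dv m).2.2, (Dv m).2.1, 0) := by
    refine Prod.ext ?_ (Prod.ext ?_ ?_) <;> simp [Dv, Function.update_apply] <;> ring
  rw [he]
  exact k1b' _ h

lemma k2a' : ∀ p ∈ Slist, ((p.1 : ℤ), 0, p.2.2 - p.2.1) ∈ Slist := by
  intro p hp
  fin_cases hp <;> decide

lemma k2a (m : Fin 6 → ℤ) (h : Dv m ∈ Slist) :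
    Dv (Function.update m 2 (m 0 + m 4)) ∈ Slist := by
  have he : Dv (Function.update m 2 (m 0 + m 4)) = ((Dv m).1, 0, (Dv m).2.2 - (Dv m).2.1) := by
    refine Prod.ext ?_ (Prod.ext ?_ ?_) <;> simp [Dv, Function.update_apply] <;> ring
  rw [he]
  exact k2a' _ h

lemma k2b' : ∀ p ∈ Slist, ((p.1 : ℤ), p.2.1 - p.2.2, 0) ∈ Slist := by
  intro p hp
  fin_cases hp <;> decide

lemma k2b (m : Fin 6 → ℤ) (h : Dv m ∈ Slist) :
    Dv (Function.update m 2 (m 1 + m 5)) ∈ Slist := by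
  have he : Dv (Function.update m 2 (m 1 + m 5)) = ((Dv m).1, (Dv m).2.1 - (Dv m).2.2, 0) := by
    refine Prod.ext ?_ (Prod.ext ?_ ?_) <;> simp [Dv, Function.update_apply] <;> ring
  rw [he]
  exact k2b' _ h

lemma k3a' : ∀ p ∈ Slist, ((0 : ℤ), p.2.1, p.2.2) ∈ Slist := by
  intro p hp
  fin_cases hp <;> decide

lemma k3a (m : Fin 6 → ℤ) (h : Dv m ∈ Slist) :
    Dv (Function.update m 3 (m 1 - m 0)) ∈ Slist := by
  have he : Dv (Function.update m 3 (m 1 - m 0)) = (0, (Dv m).2.1, (Dv m).2.2) := by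
    refine Prod.ext ?_ (Prod.ext ?_ ?_) <;> simp [Dv, Function.update_apply] <;> ring
  rw [he]
  exact k3a' _ h

lemma k3b' : ∀ p ∈ Slist, ((p.2.1 - p.2.2 : ℤ), p.2.1, p.2.2) ∈ Slist := by
  intro p hp
  fin_cases hp <;> decide

lemma k3b (m : Fin 6 → ℤ) (h : Dv m ∈ Slist) :
    Dv (Function.update m 3 (m 4 - m 5)) ∈ Slist := by
  have he : Dv (Function.update m 3 (m 4 - m 5)) = ((Dv m).2.1 - (Dv m).2.2, (Dv m).2.1, (Dv m).2.2) := by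
    refine Prod.ext ?_ (Prod.ext ?_ ?_) <;> simp [Dv, Function.update_apply] <;> ring
  rw [he]
  exact k3b' _ h

lemma k4a' : ∀ p ∈ Slist, ((p.1 : ℤ), 0, p.2.2) ∈ Slist := by
  intro p hp
  fin_cases hp <;> decide

lemma k4a (m : Fin 6 → ℤ) (h : Dv m ∈ Slist) :
    Dv (Function.update m 4 (m 2 - m 0)) ∈ Slist := by
  have he : Dv (Function.update m 4 (m 2 - m 0)) = ((Dv m).1, 0, (Dv m).2.2) := by
    refine Prod.ext ?_ (Prod.ext ?_ ?_) <;> simp [Dv, Function.update_apply] <;> ring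
  rw [he]
  exact k4a' _ h

lemma k4b' : ∀ p ∈ Slist, ((p.1 : ℤ), p.1 + p.2.2, p.2.2) ∈ Slist := by
  intro p hp
  fin_cases hp <;> decide

lemma k4b (m : Fin 6 → ℤ) (h : Dv m ∈ Slist) :
    Dv (Function.update m 4 (m 3 + m 5)) ∈ Slist := by
  have he : Dv (Function.update m 4 (m 3 + m 5)) = ((Dv m).1, (Dv m).1 + (Dv m).2.2, (Dv m).2.2) := by
    refine Prod.ext ?_ (Prod.ext ?_ ?_) <;> simp [Dv, Function.update_apply] <;> ring
  rw [he]
  exact k4b' _ h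

lemma k5a' : ∀ p ∈ Slist, ((p.1 : ℤ), p.2.1, 0) ∈ Slist := by
  intro p hp
  fin_cases hp <;> decide

lemma k5a (m : Fin 6 → ℤ) (h : Dv m ∈ Slist) :
    Dv (Function.update m 5 (m 2 - m 1)) ∈ Slist := by
  have he : Dv (Function.update m 5 (m 2 - m 1)) = ((Dv m).1, (Dv m).2.1, 0) := by
    refine Prod.ext ?_ (Prod.ext ?_ ?_) <;> simp [Dv, Function.update_apply] <;> ring
  rw [he]
  exact k5a' _ h

lemma k5b' : ∀ p ∈ Slist, ((p.1 : ℤ), p.2.1, p.2.1 - p.1) ∈ Slist := by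
  intro p hp
  fin_cases hp <;> decide

lemma k5b (m : Fin 6 → ℤ) (h : Dv m ∈ Slist) :
    Dv (Function.update m 5 (m 4 - m 3)) ∈ Slist := by
  have he : Dv (Function.update m 5 (m 4 - m 3)) = ((Dv m).1, (Dv m).2.1, (Dv m).2.1 - (Dv m).1) := by
    refine Prod.ext ?_ (Prod.ext ?_ ?_) <;> simp [Dv, Function.update_apply] <;> ring
  rw [he]
  exact k5b' _ h

lemma step (α : ℝ) (hα : 0 < α) (Rbar : Fin 6 → ℝ) (hpos : ∀ i, 0 < Rbar i)
    (hbal : IsBalanced Rbar) (A : Arb) (hA : A ∈ arbs) (R : Fin 6 → ℝ)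
    (hI : Inv α Rbar R) : Inv α Rbar (applyArb A R) := by
  obtain ⟨m, hm, hS⟩ := hI
  have hα0 : (α : ℝ) ≠ 0 := ne_of_gt hα
  have h0 : Rbar 0 ≠ 0 := ne_of_gt (hpos 0)
  have h1 : Rbar 1 ≠ 0 := ne_of_gt (hpos 1)
  have h2 : Rbar 2 ≠ 0 := ne_of_gt (hpos 2)
  have h3 : Rbar 3 ≠ 0 := ne_of_gt (hpos 3)
  have h4 : Rbar 4 ≠ 0 := ne_of_gt (hpos 4)
  have h5 : Rbar 5 ≠ 0 := ne_of_gt (hpos 5)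
  obtain ⟨hb1, hb2, hb3⟩ := hbal
  -- the twelve value identities
  have v13 : R 1 / R 3 = α ^ (m 1 - m 3) * Rbar 0 := by
    rw [hm 1, hm 3, hb1, zpow_sub₀ hα0]; first | (field_simp; ring) | field_simp
  have v24 : R 2 / R 4 = α ^ (m 2 - m 4) * Rbar 0 := by
    rw [hm 2, hm 4, hb2, zpow_sub₀ hα0]; first | (field_simp; ring) | field_simp
  have v03 : R 0 * R 3 = α ^ (m 0 + m 3) * Rbar 1 := by
    rw [hm 0, hm 3, hb1, zpow_add₀ hα0]; first | (field_simp; ring) | field_simp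
  have v25 : R 2 / R 5 = α ^ (m 2 - m 5) * Rbar 1 := by
    rw [hm 2, hm 5, hb3, zpow_sub₀ hα0]; first | (field_simp; ring) | field_simp
  have v04 : R 0 * R 4 = α ^ (m 0 + m 4) * Rbar 2 := by
    rw [hm 0, hm 4, hb2, zpow_add₀ hα0]; first | (field_simp; ring) | field_simp
  have v15 : R 1 * R 5 = α ^ (m 1 + m 5) * Rbar 2 := by
    rw [hm 1, hm 5, hb3, zpow_add₀ hα0]; first | (field_simp; ring) | field_simp
  have v10 : R 1 / R 0 = α ^ (m 1 - m 0) * Rbar 3 := by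
    rw [hm 1, hm 0, hb1, zpow_sub₀ hα0]; first | (field_simp; ring) | field_simp
  have v45 : R 4 / R 5 = α ^ (m 4 - m 5) * Rbar 3 := by
    rw [hm 4, hm 5, hb1, hb2, hb3, zpow_sub₀ hα0]; first | (field_simp; ring) | field_simp
  have v20 : R 2 / R 0 = α ^ (m 2 - m 0) * Rbar 4 := by
    rw [hm 2, hm 0, hb2, zpow_sub₀ hα0]; first | (field_simp; ring) | field_simp
  have v35 : R 3 * R 5 = α ^ (m 3 + m 5) * Rbar 4 := by
    rw [hm 3, hm 5, hb1, hb2, hb3, zpow_add₀ hα0]; first | (field_simp; ring) | field_simp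
  have v21 : R 2 / R 1 = α ^ (m 2 - m 1) * Rbar 5 := by
    rw [hm 2, hm 1, hb3, zpow_sub₀ hα0]; first | (field_simp; ring) | field_simp
  have v43 : R 4 / R 3 = α ^ (m 4 - m 3) * Rbar 5 := by
    rw [hm 4, hm 3, hb1, hb2, hb3, zpow_sub₀ hα0]; first | (field_simp; ring) | field_simp
  simp only [arbs, List.mem_cons, List.not_mem_nil, or_false] at hA
  unfold applyArb
  rcases hA with rfl|rfl|rfl|rfl|rfl|rfl|rfl|rfl|rfl|rfl|rfl|rfl|rfl|rfl|rfl|rfl|rfl|rfl|rfl|rfl|rfl|rfl|rfl|rfl <;>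
    (split
     case isFalse => exact ⟨m, hm, hS⟩)
  case isTrue => exact ⟨_, upd α Rbar R m hm 0 _ _ v13, k0a m hS⟩
  case isTrue => exact ⟨_, upd α Rbar R m hm 0 _ _ v24, k0b m hS⟩
  case isTrue => exact ⟨_, upd α Rbar R m hm 1 _ _ v03, k1a m hS⟩
  case isTrue => exact ⟨_, upd α Rbar R m hm 1 _ _ v25, k1b m hS⟩
  case isTrue => exact ⟨_, upd α Rbar R m hm 2 _ _ v04, k2a m hS⟩
  case isTrue => exact ⟨_, upd α Rbar R m hm 2 _ _ v15, k2b m hS⟩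
  case isTrue => exact ⟨_, upd α Rbar R m hm 0 _ _ v13, k0a m hS⟩
  case isTrue => exact ⟨_, upd α Rbar R m hm 0 _ _ v24, k0b m hS⟩
  case isTrue => exact ⟨_, upd α Rbar R m hm 3 _ _ v10, k3a m hS⟩
  case isTrue => exact ⟨_, upd α Rbar R m hm 3 _ _ v45, k3b m hS⟩
  case isTrue => exact ⟨_, upd α Rbar R m hm 4 _ _ v20, k4a m hS⟩
  case isTrue => exact ⟨_, upd α Rbar R m hm 4 _ _ v35, k4b m hS⟩
  case isTrue => exact ⟨_, upd α Rbar R m hm 1 _ _ v03, k1a m hS⟩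
  case isTrue => exact ⟨_, upd α Rbar R m hm 1 _ _ v25, k1b m hS⟩
  case isTrue => exact ⟨_, upd α Rbar R m hm 3 _ _ v10, k3a m hS⟩
  case isTrue => exact ⟨_, upd α Rbar R m hm 3 _ _ v45, k3b m hS⟩
  case isTrue => exact ⟨_, upd α Rbar R m hm 5 _ _ v21, k5a m hS⟩
  case isTrue => exact ⟨_, upd α Rbar R m hm 5 _ _ v43, k5b m hS⟩
  case isTrue => exact ⟨_, upd α Rbar R m hm 2 _ _ v04, k2a m hS⟩
  case isTrue => exact ⟨_, upd α Rbar R m hm 2 _ _ v15, k2b m hS⟩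
  case isTrue => exact ⟨_, upd α Rbar R m hm 4 _ _ v20, k4a m hS⟩
  case isTrue => exact ⟨_, upd α Rbar R m hm 4 _ _ v35, k4b m hS⟩
  case isTrue => exact ⟨_, upd α Rbar R m hm 5 _ _ v21, k5a m hS⟩
  case isTrue => exact ⟨_, upd α Rbar R m hm 5 _ _ v43, k5b m hS⟩

lemma chain (α : ℝ) (hα : 0 < α) (Rbar : Fin 6 → ℝ) (hpos : ∀ i, 0 < Rbar i)
    (hbal : IsBalanced Rbar) :
    ∀ (L : List Arb), (∀ A ∈ L, A ∈ arbs) → ∀ R0 : Fin 6 → ℝ, Inv α Rbar R0 →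
      Inv α Rbar (L.foldl (fun r A => applyArb A r) R0) := by
  intro L
  induction L with
  | nil => intro _ R0 h0; exact h0
  | cons A L ih =>
      intro h R0 h0
      exact ih (fun B hB => h B (List.mem_cons_of_mem _ hB)) _
        (step α hα Rbar hpos hbal A (h A List.mem_cons_self) R0 h0)

end Stmt18Aux

/-- If an ensemble `R ∈ T_α(R̄)` with exponent vector `(n1,…,n6)` (indices: `n 0 = n1`
for `r_DE`, …, `n 5 = n6` for `r_PY`) is obtained from
`R̄_α = (α·r̄_DE, r̄_DP, r̄_DY, r̄_EP, r̄_EY, r̄_PY)` by a finite chain of the 24 arbitrage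
operations, then `|n1 − n2 + n4| ≤ 1`, `|n1 − n3 + n5| ≤ 1`, `|n2 − n3 + n6| ≤ 1`. -/
theorem stmt18 (α : ℝ) (hα : 0 < α) (hα1 : α ≠ 1)
    (Rbar : Fin 6 → ℝ) (hpos : ∀ i, 0 < Rbar i) (hbal : IsBalanced Rbar)
    (L : List Arb) (hL : ∀ A ∈ L, A ∈ arbs)
    (R : Fin 6 → ℝ)
    (hR : R = L.foldl (fun r A => applyArb A r) (Function.update Rbar 0 (α * Rbar 0)))
    (n : Fin 6 → ℤ) (hn : ∀ i, R i = α ^ (n i) * Rbar i) :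
    |n 0 - n 1 + n 3| ≤ 1 ∧ |n 0 - n 2 + n 4| ≤ 1 ∧ |n 1 - n 2 + n 5| ≤ 1 := by
  have hinit : Stmt18Aux.Inv α Rbar (Function.update Rbar 0 (α * Rbar 0)) := by
    refine ⟨fun i => if i = 0 then 1 else 0, ?_, by decide⟩
    intro i
    rcases eq_or_ne i 0 with rfl | h
    · simp
    · simp [Function.update_of_ne h, h]
  have hfin : Stmt18Aux.Inv α Rbar R := by
    rw [hR]
    exact Stmt18Aux.chain α hα Rbar hpos hbal L hL _ hinit
  obtain ⟨m, hm, hS⟩ := hfin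
  have heq : ∀ i, n i = m i := by
    intro i
    have h1 : α ^ (n i) * Rbar i = α ^ (m i) * Rbar i := by rw [← hn i, ← hm i]
    have h2 : (α : ℝ) ^ (n i) = α ^ (m i) :=
      mul_right_cancel₀ (ne_of_gt (hpos i)) h1
    exact zpow_right_injective₀ hα hα1 h2
  rw [heq 0, heq 1, heq 2, heq 3, heq 4, heq 5]
  simp only [Stmt18Aux.Slist, Stmt18Aux.Dv, List.mem_cons, Prod.mk.injEq,
    List.not_mem_nil, or_false] at hS
  refine ⟨?_, ?_, ?_⟩ <;> rw [abs_le] <;> omega
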